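/- Let A be a Nelson lattice and H* = {a ∈ A : a² = a}. With operations a ∨* b = (a ∨ b)², a ∧* b = (a ∧ b)², a ⇀* b = (a² ⇒ b)², together with ⊥ and ⊤, the structure H* is a Heyting algebra. -/
import Mathlib


/-- A Nelson (residuated) lattice: a bounded lattice with a commutative monoid
operation `mul` (unit `⊤`) residuated by `imp`, which is involutive
(`∼∼a = a` where `∼a = a ⇒ ⊥`) and satisfies the Nelson identity
`((a² ⇒ b) ⊓ ((∼b)² ⇒ ∼a)) ⇒ (a ⇒ b) = ⊤`. -/
structure NelsonStruct (A : Type*) [Lattice A] [BoundedOrder A] where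
  mul : A → A → A
  imp : A → A → A
  mul_comm : ∀ a b, mul a b = mul b a
  mul_assoc : ∀ a b c, mul (mul a b) c = mul a (mul b c)
  top_mul : ∀ a, mul ⊤ a = a
  res : ∀ a b c, mul a b ≤ c ↔ b ≤ imp a c
  involutive : ∀ a, imp (imp a ⊥) ⊥ = a
  nelson : ∀ a b,
    imp ((imp (mul a a) b) ⊓
         (imp (mul (imp b ⊥) (imp b ⊥)) (imp a ⊥))) (imp a b) = ⊤

namespace NelsonStruct

variable {A : Type*} [Lattice A] [BoundedOrder A] (N : NelsonStruct A)

/-- The square `a² = a * a`. -/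
def sq (a : A) : A := N.mul a a

/-- The strong negation `∼a = a ⇒ ⊥`. -/
def sneg (a : A) : A := N.imp a ⊥

lemma mul_top (a : A) : N.mul a ⊤ = a := by rw [N.mul_comm, N.top_mul]

lemma le_iff_top {a b : A} : a ≤ b ↔ (⊤ : A) ≤ N.imp a b := by
  have h := N.res a ⊤ b
  rwa [N.mul_top] at h

lemma mul_le_right (a : A) {b c : A} (h : b ≤ c) : N.mul a b ≤ N.mul a c :=
  (N.res a b (N.mul a c)).mpr (le_trans h ((N.res a c (N.mul a c)).mp le_rfl))

lemma mul_le_mul {a b c d : A} (h1 : a ≤ b) (h2 : c ≤ d) :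
    N.mul a c ≤ N.mul b d := by
  refine le_trans (N.mul_le_right a h2) ?_
  rw [N.mul_comm a d, N.mul_comm b d]
  exact N.mul_le_right d h1

lemma mul_le_left' (a b : A) : N.mul a b ≤ a := by
  have := N.mul_le_right a (le_top (a := b))
  rwa [N.mul_top] at this

lemma mul_le_right' (a b : A) : N.mul a b ≤ b := by
  rw [N.mul_comm]; exact N.mul_le_left' b a

lemma mul_left_comm (a b c : A) : N.mul a (N.mul b c) = N.mul b (N.mul a c) := by
  rw [← N.mul_assoc, N.mul_comm a b, N.mul_assoc]

lemma mul_mul_mul_comm (a b c d : A) :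
    N.mul (N.mul a b) (N.mul c d) = N.mul (N.mul a c) (N.mul b d) := by
  rw [N.mul_assoc, N.mul_left_comm b c d, ← N.mul_assoc]

lemma nelson_le (a b : A) :
    (N.imp (N.mul a a) b) ⊓
      (N.imp (N.mul (N.imp b ⊥) (N.imp b ⊥)) (N.imp a ⊥)) ≤ N.imp a b := by
  rw [le_iff_top]
  rw [N.nelson a b]

lemma nelson_bot (x z : A) (h1 : N.mul (N.mul x x) z ≤ ⊥)
    (h2 : N.mul x (N.mul z z) ≤ ⊥) : N.mul x z ≤ ⊥ := by
  set b := N.imp z ⊥ with hb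
  have hnb : N.imp b ⊥ = z := N.involutive z
  have key := N.nelson_le x b
  rw [hnb] at key
  have c1 : (⊤ : A) ≤ N.imp (N.mul x x) b := by
    rw [← le_iff_top]
    exact (N.res z (N.mul x x) ⊥).mp (by rwa [N.mul_comm z (N.mul x x)])
  have c2 : (⊤ : A) ≤ N.imp (N.mul z z) (N.imp x ⊥) := by
    rw [← le_iff_top]
    exact (N.res x (N.mul z z) ⊥).mp h2
  have : (⊤ : A) ≤ N.imp x b := le_trans (le_inf c1 c2) key
  have hx : x ≤ b := (N.le_iff_top).mpr this
  have := (N.res z x ⊥).mpr hx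
  rwa [N.mul_comm z x] at this

/-- 3-potency: `a³ = a²`. -/
lemma pow3 (x : A) : N.mul (N.mul x x) x = N.mul x x := by
  set x2 := N.mul x x with hx2
  set x4 := N.mul x2 x2 with hx4
  set w := N.imp x4 ⊥ with hw
  have hx2x : x2 ≤ x := N.mul_le_left' x x
  have hww : N.mul w w ≤ w := N.mul_le_left' w w
  have h4w : N.mul x4 w ≤ ⊥ := (N.res x4 w ⊥).mpr le_rfl
  -- Step 1 : x³ w² ≤ ⊥   (as  x · (x² · w²) ≤ ⊥)
  have step1 : N.mul x (N.mul x2 (N.mul w w)) ≤ ⊥ := by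
    apply N.nelson_bot
    · -- x2 · (x2 · w²) ≤ ⊥
      rw [← hx2, ← N.mul_assoc, ← hx4]
      exact le_trans (N.mul_le_right x4 hww) h4w
    · -- x · ((x2 w²)·(x2 w²)) ≤ ⊥
      have hz : N.mul (N.mul x2 (N.mul w w)) (N.mul x2 (N.mul w w)) ≤ ⊥ := by
        rw [N.mul_mul_mul_comm, ← hx4]
        refine le_trans (N.mul_le_right x4 ?_) h4w
        exact le_trans (N.mul_le_mul hww hww) hww
      exact le_trans (N.mul_le_right' x _) hz
  -- Step 2 : x² w² ≤ ⊥   (as  x · (x · w²) ≤ ⊥)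
  have step2 : N.mul x (N.mul x (N.mul w w)) ≤ ⊥ := by
    apply N.nelson_bot
    · rw [← hx2, N.mul_left_comm x2 x (N.mul w w)]
      exact step1
    · have hzz : N.mul (N.mul x (N.mul w w)) (N.mul x (N.mul w w)) =
          N.mul x2 (N.mul (N.mul w w) (N.mul w w)) := by
        rw [N.mul_mul_mul_comm, ← hx2]
      rw [hzz]
      refine le_trans (N.mul_le_right x (N.mul_le_right x2 ?_)) step1
      exact N.mul_le_mul hww hww
  -- Step 3 : w² ≤ ∼ x²
  have step3 : N.mul w w ≤ N.imp x2 ⊥ := by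
    apply (N.res x2 (N.mul w w) ⊥).mp
    rw [hx2, N.mul_assoc]
    exact step2
  -- Nelson for (x², x⁴) : x² ≤ x⁴
  have key := N.nelson_le x2 x4
  have c1 : (⊤ : A) ≤ N.imp (N.mul x2 x2) x4 := by rw [← le_iff_top, ← hx4]
  have c2 : (⊤ : A) ≤ N.imp (N.mul (N.imp x4 ⊥) (N.imp x4 ⊥)) (N.imp x2 ⊥) := by
    rw [← le_iff_top, ← hw]; exact step3
  have h24 : x2 ≤ x4 := N.le_iff_top.mpr (le_trans (le_inf c1 c2) key)
  have h43 : x4 ≤ N.mul x2 x := N.mul_le_right x2 hx2x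
  have h32 : N.mul x2 x ≤ x2 := N.mul_le_left' x2 x
  exact le_antisymm h32 (le_trans h24 h43)

lemma sq_le (x : A) : N.sq x ≤ x := N.mul_le_left' x x

lemma sq_mono {x y : A} (h : x ≤ y) : N.sq x ≤ N.sq y := N.mul_le_mul h h

lemma sq_sq (x : A) : N.sq (N.sq x) = N.sq x := by
  show N.mul (N.mul x x) (N.mul x x) = N.mul x x
  rw [← N.mul_assoc, N.pow3, N.pow3]


lemma sq_bot : N.sq (⊥ : A) = ⊥ := le_antisymm (N.sq_le ⊥) bot_le

lemma sq_top : N.sq (⊤ : A) = ⊤ := N.top_mul ⊤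

lemma sq_inf_le_left (a b : A) : N.sq (a ⊓ b) ≤ a :=
  le_trans (N.sq_le _) inf_le_left

lemma sq_inf_le_right (a b : A) : N.sq (a ⊓ b) ≤ b :=
  le_trans (N.sq_le _) inf_le_right

lemma idem_le_sq_inf {x a b : A} (hx : N.sq x = x) (h1 : x ≤ a) (h2 : x ≤ b) :
    x ≤ N.sq (a ⊓ b) := by
  conv_lhs => rw [← hx]
  exact N.sq_mono (le_inf h1 h2)

lemma idem_le_sq_sup_left {a b : A} (ha : N.sq a = a) : a ≤ N.sq (a ⊔ b) := by
  conv_lhs => rw [← ha]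
  exact N.sq_mono le_sup_left

lemma idem_le_sq_sup_right {a b : A} (hb : N.sq b = b) : b ≤ N.sq (a ⊔ b) := by
  conv_lhs => rw [← hb]
  exact N.sq_mono le_sup_right

lemma sq_sup_le {a b d : A} (hd : N.sq d = d) (h1 : a ≤ d) (h2 : b ≤ d) :
    N.sq (a ⊔ b) ≤ d := by
  conv_rhs => rw [← hd]
  exact N.sq_mono (sup_le h1 h2)

/-- The induced order on idempotents: `(x ⊓ y)² = x ↔ x ≤ y`. -/
lemma sq_inf_eq_iff {x y : A} (hx : N.sq x = x) :
    N.sq (x ⊓ y) = x ↔ x ≤ y := by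
  constructor
  · intro h
    calc x = N.sq (x ⊓ y) := h.symm
    _ ≤ x ⊓ y := N.sq_le _
    _ ≤ y := inf_le_right
  · intro h
    rw [inf_eq_left.mpr h, hx]

/-- Residuation on idempotents: `(a ⊓ c)² ≤ b ↔ c ≤ (a ⇒ b)²`. -/
lemma res_star {a b c : A} (ha : N.sq a = a) (hc : N.sq c = c) :
    N.sq (a ⊓ c) ≤ b ↔ c ≤ N.sq (N.imp a b) := by
  constructor
  · intro h
    have hmac : N.mul a c = N.sq (N.mul a c) := by
      conv_lhs => rw [← ha, ← hc]
      show N.mul (N.mul a a) (N.mul c c) = _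
      rw [N.mul_mul_mul_comm]; rfl
    have hle : N.mul a c ≤ b := by
      refine le_trans (le_of_eq hmac) (le_trans ?_ h)
      exact N.sq_mono (le_inf (N.mul_le_left' a c) (N.mul_le_right' a c))
    have : c ≤ N.imp a b := (N.res a c b).mp hle
    conv_lhs => rw [← hc]
    exact N.sq_mono this
  · intro h
    have h2 : c ≤ N.imp a b := le_trans h (N.sq_le _)
    have h3 : N.mul a c ≤ b := (N.res a c b).mpr h2
    refine le_trans ?_ h3
    exact N.mul_le_mul inf_le_left inf_le_right


end NelsonStruct

/-- For a Nelson lattice `A`, the set `H* = {a : a² = a}` with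
operations `a ∨* b = (a ⊔ b)²`, `a ∧* b = (a ⊓ b)²`, `a ⇀* b = (a² ⇒ b)²`,
and the bounds `⊥`, `⊤`, is a Heyting algebra (with order `a ≤* b` iff
`a ∧* b = a`): the operations are well defined on `H*`, `∧*`/`∨*` are the
meet/join of a bounded lattice, and `⇀*` is the residual of `∧*`. -/
theorem NelsonStruct.Hstar_is_heyting {A : Type*} [Lattice A] [BoundedOrder A]
    (N : NelsonStruct A) :
    -- closure of the operations and constants
    (∀ a b : A, N.sq a = a → N.sq b = b →
        N.sq (N.sq (a ⊓ b)) = N.sq (a ⊓ b) ∧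
        N.sq (N.sq (a ⊔ b)) = N.sq (a ⊔ b) ∧
        N.sq (N.sq (N.imp (N.sq a) b)) = N.sq (N.imp (N.sq a) b)) ∧
    N.sq (⊥ : A) = ⊥ ∧ N.sq (⊤ : A) = ⊤ ∧
    -- `∧*` and `∨*` are commutative, associative, idempotent and absorptive
    (∀ a b : A, N.sq a = a → N.sq b = b →
        N.sq (a ⊓ b) = N.sq (b ⊓ a) ∧ N.sq (a ⊔ b) = N.sq (b ⊔ a)) ∧
    (∀ a b c : A, N.sq a = a → N.sq b = b → N.sq c = c →
        N.sq (N.sq (a ⊓ b) ⊓ c) = N.sq (a ⊓ N.sq (b ⊓ c)) ∧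
        N.sq (N.sq (a ⊔ b) ⊔ c) = N.sq (a ⊔ N.sq (b ⊔ c))) ∧
    (∀ a : A, N.sq a = a → N.sq (a ⊓ a) = a ∧ N.sq (a ⊔ a) = a) ∧
    (∀ a b : A, N.sq a = a → N.sq b = b →
        N.sq (a ⊓ N.sq (a ⊔ b)) = a ∧ N.sq (a ⊔ N.sq (a ⊓ b)) = a) ∧
    -- bounds
    (∀ a : A, N.sq a = a → N.sq (a ⊓ ⊥) = ⊥ ∧ N.sq (a ⊔ ⊤) = ⊤) ∧
    -- `⇀*` is the residual of `∧*` with respect to the induced order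
    (∀ a b c : A, N.sq a = a → N.sq b = b → N.sq c = c →
        (N.sq (N.sq (a ⊓ c) ⊓ b) = N.sq (a ⊓ c) ↔
          N.sq (c ⊓ N.sq (N.imp (N.sq a) b)) = c)) := by
  refine ⟨?_, N.sq_bot, N.sq_top, ?_, ?_, ?_, ?_, ?_, ?_⟩
  · intro a b _ _
    exact ⟨N.sq_sq _, N.sq_sq _, N.sq_sq _⟩
  · intro a b _ _
    constructor
    · rw [inf_comm]
    · rw [sup_comm]
  · intro a b c ha hb hc
    constructor
    · -- meet associativity
      apply le_antisymm
      · have hL : N.sq (N.sq (a ⊓ b) ⊓ c) ≤ a ⊓ b :=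
          le_trans (N.sq_inf_le_left _ _) (N.sq_le _)
        have hLc : N.sq (N.sq (a ⊓ b) ⊓ c) ≤ c := N.sq_inf_le_right _ _
        refine N.idem_le_sq_inf (N.sq_sq _) (le_trans hL inf_le_left) ?_
        exact N.idem_le_sq_inf (N.sq_sq _) (le_trans hL inf_le_right) hLc
      · have hR : N.sq (a ⊓ N.sq (b ⊓ c)) ≤ b ⊓ c :=
          le_trans (N.sq_inf_le_right _ _) (N.sq_le _)
        have hRa : N.sq (a ⊓ N.sq (b ⊓ c)) ≤ a := N.sq_inf_le_left _ _
        refine N.idem_le_sq_inf (N.sq_sq _) ?_ (le_trans hR inf_le_right)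
        exact N.idem_le_sq_inf (N.sq_sq _) hRa (le_trans hR inf_le_left)
    · -- join associativity
      apply le_antisymm
      · have haR : a ≤ N.sq (a ⊔ N.sq (b ⊔ c)) := N.idem_le_sq_sup_left ha
        have hbR : b ≤ N.sq (a ⊔ N.sq (b ⊔ c)) :=
          le_trans (N.idem_le_sq_sup_left hb) (N.idem_le_sq_sup_right (N.sq_sq _))
        have hcR : c ≤ N.sq (a ⊔ N.sq (b ⊔ c)) :=
          le_trans (N.idem_le_sq_sup_right hc) (N.idem_le_sq_sup_right (N.sq_sq _))
        exact N.sq_sup_le (N.sq_sq _) (N.sq_sup_le (N.sq_sq _) haR hbR) hcR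
      · have haL : a ≤ N.sq (N.sq (a ⊔ b) ⊔ c) :=
          le_trans (N.idem_le_sq_sup_left ha) (N.idem_le_sq_sup_left (N.sq_sq _))
        have hbL : b ≤ N.sq (N.sq (a ⊔ b) ⊔ c) :=
          le_trans (N.idem_le_sq_sup_right hb) (N.idem_le_sq_sup_left (N.sq_sq _))
        have hcL : c ≤ N.sq (N.sq (a ⊔ b) ⊔ c) := N.idem_le_sq_sup_right hc
        exact N.sq_sup_le (N.sq_sq _) haL (N.sq_sup_le (N.sq_sq _) hbL hcL)
  · intro a ha
    constructor
    · rw [inf_idem]; exact ha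
    · rw [sup_idem]; exact ha
  · intro a b ha hb
    constructor
    · have h : a ≤ N.sq (a ⊔ b) := N.idem_le_sq_sup_left ha
      rw [inf_eq_left.mpr h]; exact ha
    · have h : N.sq (a ⊓ b) ≤ a := N.sq_inf_le_left _ _
      rw [sup_eq_left.mpr h]; exact ha
  · intro a _
    constructor
    · rw [inf_bot_eq]; exact N.sq_bot
    · rw [sup_top_eq]; exact N.sq_top
  · intro a b c ha hb hc
    rw [N.sq_inf_eq_iff (N.sq_sq _), N.sq_inf_eq_iff hc, ha]
    exact N.res_star ha hc
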